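/- For every natural number k and every rational number λ ≠ 1, P_k((1+λ)/(1−λ)) · (λ−1)^k = (−1)^k · Σ_{j=0}^{k} C(k,j)² λ^j, where P_k is the k-th Legendre polynomial. -/

import Mathlib

open Finset Polynomial

/-- The `k`-th Legendre polynomial over `ℚ`, via the Rodrigues formula
`P_k(x) = (1/(2^k k!)) (d/dx)^k (x²−1)^k`. -/
noncomputable def legendreP (k : ℕ) : Polynomial ℚ :=
  Polynomial.C (1 / (2 ^ k * k.factorial : ℚ)) *
    (Polynomial.derivative^[k] ((Polynomial.X ^ 2 - 1) ^ k))

theorem stmt17 (k : ℕ) (lam : ℚ) (hlam : lam ≠ 1) :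
    (legendreP k).eval ((1 + lam) / (1 - lam)) * (lam - 1) ^ k
      = (-1) ^ k * ∑ j ∈ range (k + 1), (Nat.choose k j : ℚ) ^ 2 * lam ^ j := by
  have h0 : (1 - lam) ≠ 0 := sub_ne_zero.mpr (fun h => hlam h.symm)
  set x : ℚ := (1 + lam) / (1 - lam) with hx
  have hx1 : x - 1 = 2 * lam / (1 - lam) := by
    rw [hx]; field_simp; ring
  have hx2 : x + 1 = 2 / (1 - lam) := by
    rw [hx]; field_simp; ring
  have hsplit : ((X : ℚ[X]) ^ 2 - 1) ^ k = (X - C 1) ^ k * (X + C 1) ^ k := by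
    rw [← mul_pow]; congr 1; simp; ring
  rw [legendreP, hsplit, iterate_derivative_mul]
  simp only [iterate_derivative_X_sub_pow, iterate_derivative_X_add_pow]
  rw [eval_mul, eval_C, eval_finset_sum]
  simp only [smul_smul, eval_smul, eval_mul, eval_smul, eval_pow, eval_sub, eval_add, eval_X,
    eval_one, eval_C, eval_natCast, smul_eq_mul, nsmul_eq_mul]
  rw [Finset.mul_sum, Finset.sum_mul, Finset.mul_sum]
  refine Finset.sum_congr rfl fun j hj => ?_
  rw [Finset.mem_range, Nat.lt_succ_iff] at hj
  obtain ⟨m, rfl⟩ := Nat.exists_eq_add_of_le hj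
  have hjm : j + m - j = m := by omega
  have hjm2 : j + m - m = j := by omega
  rw [hjm, hjm2, hx1, hx2]
  have hcs : (j + m).choose m = (j + m).choose j := by
    rw [add_comm j m]; exact Nat.choose_symm_add
  rw [Nat.descFactorial_eq_factorial_mul_choose, Nat.descFactorial_eq_factorial_mul_choose, hcs]
  have hk : (m.factorial : ℚ) * j.factorial * ((j + m).choose j) = (j + m).factorial := by
    have := Nat.choose_mul_factorial_mul_factorial hj
    rw [hjm] at this
    rw_mod_cast [← this]; ring
  have hC : (((j + m).choose j : ℕ) : ℚ) ≠ 0 :=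
    Nat.cast_ne_zero.mpr (Nat.choose_pos hj).ne'
  have hjf : (j.factorial : ℚ) ≠ 0 := Nat.cast_ne_zero.mpr j.factorial_ne_zero
  have hmf : (m.factorial : ℚ) ≠ 0 := Nat.cast_ne_zero.mpr m.factorial_ne_zero
  have hm2 : (lam - 1) ^ (j + m) = (-1) ^ (j + m) * (1 - lam) ^ (j + m) := by
    rw [← neg_one_mul, ← mul_pow]; ring_nf
  rw [← hk, hm2]
  push_cast
  field_simp
  have e1 : (1 - lam)⁻¹ ^ j * (1 - lam) ^ j = 1 := by rw [← mul_pow, inv_mul_cancel₀ h0, one_pow]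
  have e2 : (1 - lam)⁻¹ ^ m * (1 - lam) ^ m = 1 := by rw [← mul_pow, inv_mul_cancel₀ h0, one_pow]
  linear_combination (lam ^ j * 2 ^ j * 2 ^ m * (1 - lam)⁻¹ ^ m * (1 - lam) ^ m) * e1 + (lam ^ j * 2 ^ j * 2 ^ m) * e2
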